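/- Let k ≥ 1 and let α, θ be complex numbers with α ≠ 0 and θ = exp(2πi/k). Let g(z) = Σ_{j=0}^{k-1} c_j e^{α θ^j z} with c_{k-1} ≠ 0. Then the functions 1, g, g², g³ are linearly independent over the ring of polynomials ℂ[z]: if p₀(z) + p₁(z)g(z) + p₂(z)g(z)² + p₃(z)g(z)³ = 0 identically for polynomials p₀, p₁, p₂, p₃, then p₀ = p₁ = p₂ = p₃ = 0. -/

import Mathlib

open Polynomial Complex

noncomputable def Tfun (μ : ℂ) (p : Polynomial ℂ) : Polynomial ℂ :=
  p.derivative + Polynomial.C μ * p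

lemma hasDerivAt_term (p : Polynomial ℂ) (μ z : ℂ) :
    HasDerivAt (fun w => p.eval w * Complex.exp (μ * w))
      ((Tfun μ p).eval z * Complex.exp (μ * z)) z := by
  have h1 : HasDerivAt (fun w : ℂ => μ * w) μ z := by
    simpa using (hasDerivAt_id z).const_mul μ
  have h2 : HasDerivAt (fun w => Complex.exp (μ * w)) (Complex.exp (μ * z) * μ) z :=
    (Complex.hasDerivAt_exp (μ * z)).comp z h1
  have h3 := (p.hasDerivAt z).fun_mul h2
  refine h3.congr_deriv ?_
  simp [Tfun]
  ring

lemma derivStep {ι : Type*} (s : Finset ι) (e : ι → ℂ) (q : ι → Polynomial ℂ)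
    (H : ∀ z, ∑ i ∈ s, (q i).eval z * Complex.exp (e i * z) = 0) :
    ∀ z, ∑ i ∈ s, (Tfun (e i) (q i)).eval z * Complex.exp (e i * z) = 0 := by
  intro z
  have hF : HasDerivAt (fun w => ∑ i ∈ s, (q i).eval w * Complex.exp (e i * w))
      (∑ i ∈ s, (Tfun (e i) (q i)).eval z * Complex.exp (e i * z)) z :=
    HasDerivAt.fun_sum fun i _ => hasDerivAt_term (q i) (e i) z
  have hzero : (fun w => ∑ i ∈ s, (q i).eval w * Complex.exp (e i * w)) = fun _ => (0:ℂ) :=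
    funext H
  rw [hzero] at hF
  exact hF.unique (hasDerivAt_const z 0)

lemma Tfun_ne_zero {μ : ℂ} (hμ : μ ≠ 0) {p : Polynomial ℂ} (hp : p ≠ 0) : Tfun μ p ≠ 0 := by
  intro h
  have hco : (Tfun μ p).coeff p.natDegree = μ * p.leadingCoeff := by
    rw [Tfun, Polynomial.coeff_add, Polynomial.coeff_C_mul, Polynomial.coeff_derivative,
      Polynomial.coeff_eq_zero_of_natDegree_lt (Nat.lt_succ_self p.natDegree)]
    rw [zero_mul, zero_add, Polynomial.coeff_natDegree]
  rw [h] at hco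
  simp at hco
  rcases hco with h1 | h2
  · exact hμ h1
  · exact hp h2

lemma Tfun_iter_ne_zero {μ : ℂ} (hμ : μ ≠ 0) (m : ℕ) {p : Polynomial ℂ} (hp : p ≠ 0) :
    (Tfun μ)^[m] p ≠ 0 := by
  induction m generalizing p with
  | zero => simpa
  | succ n ih =>
    rw [Function.iterate_succ_apply]
    exact ih (Tfun_ne_zero hμ hp)

lemma Tfun_zero_eq : Tfun 0 = Polynomial.derivative := by
  funext p; simp [Tfun]

lemma key : ∀ (n : ℕ) (s : Finset ℂ), s.card = n → ∀ q : ℂ → Polynomial ℂ,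
    (∀ z, ∑ μ ∈ s, (q μ).eval z * Complex.exp (μ * z) = 0) → ∀ μ ∈ s, q μ = 0 := by
  intro n
  induction n with
  | zero =>
    intro s hs q _ μ hμ
    rw [Finset.card_eq_zero] at hs
    simp [hs] at hμ
  | succ n ih =>
    intro s hs q H l₀ hl₀
    -- first multiply by exp(-l₀ z)
    have H1 : ∀ z, ∑ μ ∈ s, (q μ).eval z * Complex.exp ((μ - l₀) * z) = 0 := by
      intro z
      have h := congrArg (· * Complex.exp (-l₀ * z)) (H z)
      simp only [Finset.sum_mul, zero_mul] at h
      rw [← h]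
      apply Finset.sum_congr rfl
      intro μ _
      rw [mul_assoc, ← Complex.exp_add]
      ring_nf
    set m : ℕ := (q l₀).natDegree + 1 with hm
    have Hm : ∀ z, ∑ μ ∈ s, ((Tfun (μ - l₀))^[m] (q μ)).eval z * Complex.exp ((μ - l₀) * z) = 0 := by
      have : ∀ j : ℕ, ∀ z,
          ∑ μ ∈ s, ((Tfun (μ - l₀))^[j] (q μ)).eval z * Complex.exp ((μ - l₀) * z) = 0 := by
        intro j
        induction j with
        | zero => simpa using H1
        | succ i ihh =>
          have := derivStep s (fun μ => μ - l₀) (fun μ => (Tfun (μ - l₀))^[i] (q μ)) ihh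
          intro z
          have h2 := this z
          rw [← h2]
          apply Finset.sum_congr rfl
          intro μ _
          rw [Function.iterate_succ_apply']
      exact this m
    -- the l₀ term vanishes
    have hl₀term : (Tfun ((l₀:ℂ) - l₀))^[m] (q l₀) = 0 := by
      rw [sub_self, Tfun_zero_eq]
      exact Polynomial.iterate_derivative_eq_zero (Nat.lt_succ_self _)
    have Herase : ∀ z, ∑ μ ∈ s.erase l₀,
        ((Tfun (μ - l₀))^[m] (q μ)).eval z * Complex.exp ((μ - l₀) * z) = 0 := by
      intro z
      have := Hm z
      rw [← Finset.add_sum_erase s _ hl₀] at this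
      rw [hl₀term] at this
      simpa using this
    -- reindex over differences
    set s' : Finset ℂ := (s.erase l₀).image (fun μ => μ - l₀) with hs'
    have hinj : Set.InjOn (fun μ : ℂ => μ - l₀) (s.erase l₀) := fun a _ b _ h => by
      simpa using sub_left_injective h
    have hcard : s'.card = n := by
      rw [hs', Finset.card_image_of_injOn hinj, Finset.card_erase_of_mem hl₀, hs]
      omega
    set q' : ℂ → Polynomial ℂ := fun ν => (Tfun ν)^[m] (q (ν + l₀)) with hq'
    have Hs' : ∀ z, ∑ ν ∈ s', (q' ν).eval z * Complex.exp (ν * z) = 0 := by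
      intro z
      rw [hs', Finset.sum_image hinj]
      rw [← Herase z]
      apply Finset.sum_congr rfl
      intro μ _
      simp [hq', sub_add_cancel]
    have hall := ih s' hcard q' Hs'
    have hqmu : ∀ μ ∈ s.erase l₀, q μ = 0 := by
      intro μ hμ
      have hmem : μ - l₀ ∈ s' := by
        rw [hs']; exact Finset.mem_image_of_mem _ hμ
      have h0 := hall _ hmem
      rw [hq'] at h0
      simp only [sub_add_cancel] at h0
      by_contra hne
      exact Tfun_iter_ne_zero (sub_ne_zero.mpr (Finset.ne_of_mem_erase hμ)) m hne h0
    -- now the original relation gives q l₀ = 0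
    have hq0 : q l₀ = 0 := by
      apply Polynomial.funext
      intro z
      have hz := H z
      rw [← Finset.add_sum_erase s _ hl₀,
        Finset.sum_eq_zero (fun μ hμ => by rw [hqmu μ hμ]; simp), add_zero] at hz
      rw [Polynomial.eval_zero]
      exact (mul_eq_zero.mp hz).resolve_right (Complex.exp_ne_zero _)
    exact hq0
lemma ite_nest {c : Prop} [Decidable c] {α : Type*} [Zero α] (a : α) :
    (if c then (if c then a else 0) else 0) = if c then a else 0 := by
  split_ifs <;> rfl

lemma re_uI_mul (u : ℝ) (x : ℂ) : (((u:ℂ) + Complex.I) * x).re = u * x.re - x.im := by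
  simp [Complex.add_re, Complex.mul_re]

lemma choose_dir (k : ℕ) (l : ℕ → ℂ) (S : Finset ℕ) (hS : S.Nonempty) (hSr : ∀ a ∈ S, a < k)
    (hinj : ∀ a, a < k → ∀ b, b < k → l a = l b → a = b) (hl0 : ∀ a, a < k → l a ≠ 0) :
    ∃ w : ℂ, ∃ j : ℕ, j ∈ S ∧ 0 < (w * l j).re ∧
      ∀ a ∈ S, a ≠ j → (w * l a).re < (w * l j).re := by
  classical
  set T : Finset ℂ :=
    (((Finset.range k) ×ˢ (Finset.range k)).filter fun ab => ab.1 ≠ ab.2).image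
      (fun ab => l ab.1 - l ab.2) ∪ (Finset.range k).image l with hT
  have hTne : ∀ d ∈ T, d ≠ 0 := by
    intro d hd
    rw [hT, Finset.mem_union] at hd
    rcases hd with hd | hd
    · simp only [Finset.mem_image, Finset.mem_filter, Finset.mem_product,
        Finset.mem_range] at hd
      obtain ⟨⟨a, b⟩, ⟨⟨ha, hb⟩, hab⟩, rfl⟩ := hd
      intro h0
      exact hab (hinj a ha b hb (sub_eq_zero.mp h0))
    · simp only [Finset.mem_image, Finset.mem_range] at hd
      obtain ⟨a, ha, rfl⟩ := hd
      exact hl0 a ha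
  obtain ⟨u, hu⟩ := Infinite.exists_notMem_finset (T.image fun d => d.im / d.re)
  have hud : ∀ d ∈ T, u * d.re - d.im ≠ 0 := by
    intro d hd h0
    by_cases hre : d.re = 0
    · have him : d.im ≠ 0 := by
        intro him
        exact hTne d hd (Complex.ext hre him)
      rw [hre] at h0; simp at h0; exact him h0
    · apply hu
      refine Finset.mem_image.mpr ⟨d, hd, ?_⟩
      field_simp
      linarith [sub_eq_zero.mp h0]
  set w₀ : ℂ := (u:ℂ) + Complex.I with hw₀
  have hφne : ∀ a, a < k → ∀ b, b < k → a ≠ b → (w₀ * l a).re ≠ (w₀ * l b).re := by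
    intro a ha b hb hab heq
    have hdT : l a - l b ∈ T := by
      rw [hT, Finset.mem_union]
      left
      exact Finset.mem_image.mpr ⟨(a, b), by simp [ha, hb, hab], rfl⟩
    apply hud _ hdT
    have : (w₀ * (l a - l b)).re = (w₀ * l a).re - (w₀ * l b).re := by
      rw [mul_sub, Complex.sub_re]
    rw [re_uI_mul] at this
    rw [this, heq, sub_self]
  have hφ0 : ∀ a, a < k → (w₀ * l a).re ≠ 0 := by
    intro a ha
    have hdT : l a ∈ T := by
      rw [hT, Finset.mem_union]
      right
      exact Finset.mem_image.mpr ⟨a, by simp [ha], rfl⟩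
    rw [re_uI_mul]
    exact hud _ hdT
  obtain ⟨jp, hjp, hmaxp⟩ := S.exists_max_image (fun a => (w₀ * l a).re) hS
  by_cases hsgn : 0 < (w₀ * l jp).re
  · refine ⟨w₀, jp, hjp, hsgn, ?_⟩
    intro a ha hane
    exact lt_of_le_of_ne (hmaxp a ha) (hφne a (hSr a ha) jp (hSr jp hjp) hane)
  · have hneg : ∀ a ∈ S, (w₀ * l a).re < 0 := by
      intro a ha
      have h1 := hmaxp a ha
      have h2 := hφ0 jp (hSr jp hjp)
      have h3 := hφ0 a (hSr a ha)
      rcases lt_or_gt_of_ne h3 with h | h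
      · exact h
      · exfalso
        apply hsgn
        linarith
    obtain ⟨jm, hjm, hmaxm⟩ := S.exists_max_image (fun a => (-w₀ * l a).re) hS
    refine ⟨-w₀, jm, hjm, ?_, ?_⟩
    · have : (-w₀ * l jm).re = -((w₀ * l jm).re) := by
        rw [neg_mul, Complex.neg_re]
      rw [this]
      linarith [hneg jm hjm]
    · intro a ha hane
      apply lt_of_le_of_ne (hmaxm a ha)
      have e1 : (-w₀ * l a).re = -((w₀ * l a).re) := by rw [neg_mul, Complex.neg_re]
      have e2 : (-w₀ * l jm).re = -((w₀ * l jm).re) := by rw [neg_mul, Complex.neg_re]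
      rw [e1, e2]
      intro h
      exact hφne a (hSr a ha) jm (hSr jm hjm) hane (by linarith [neg_injective h])

theorem stmt15 (k : ℕ) (hk : 1 ≤ k) (α θ : ℂ) (hα : α ≠ 0)
    (hθ : θ = Complex.exp (2 * Real.pi * Complex.I / k))
    (c : ℕ → ℂ) (hc : c (k - 1) ≠ 0) (g : ℂ → ℂ)
    (hg : ∀ z, g z = ∑ j ∈ Finset.range k, c j * Complex.exp (α * θ ^ j * z)) :
    ∀ p₀ p₁ p₂ p₃ : Polynomial ℂ,
      (∀ z, p₀.eval z + p₁.eval z * g z + p₂.eval z * (g z) ^ 2 + p₃.eval z * (g z) ^ 3 = 0) →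
      p₀ = 0 ∧ p₁ = 0 ∧ p₂ = 0 ∧ p₃ = 0 := by
  intro p₀ p₁ p₂ p₃ hrel
  classical
  have hk0 : k ≠ 0 := by omega
  have hprim : IsPrimitiveRoot θ k := by
    rw [hθ]; exact Complex.isPrimitiveRoot_exp k hk0
  set l : ℕ → ℂ := fun j => α * θ ^ j with hl
  have hθ0 : θ ≠ 0 := by rw [hθ]; exact Complex.exp_ne_zero _
  have hlinj : ∀ a, a < k → ∀ b, b < k → l a = l b → a = b := by
    intro a ha b hb h
    exact hprim.pow_inj ha hb (mul_left_cancel₀ hα h)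
  have hl0 : ∀ a, a < k → l a ≠ 0 := by
    intro a _ h
    rcases mul_eq_zero.mp h with h' | h'
    · exact hα h'
    · exact hθ0 (pow_eq_zero_iff'.mp h').1
  set S : Finset ℕ := (Finset.range k).filter (fun j => c j ≠ 0) with hS
  have hkS : k - 1 ∈ S := by
    rw [hS, Finset.mem_filter, Finset.mem_range]
    exact ⟨by omega, hc⟩
  have hSr : ∀ a ∈ S, a < k := fun a ha =>
    Finset.mem_range.mp (Finset.mem_filter.mp ha).1
  have hSc : ∀ a ∈ S, c a ≠ 0 := fun a ha => (Finset.mem_filter.mp ha).2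
  have hmemS : ∀ a, a ∈ Finset.range k → c a ≠ 0 → a ∈ S := by
    intro a ha hca; rw [hS, Finset.mem_filter]; exact ⟨ha, hca⟩
  obtain ⟨w, j₀, hj₀S, hpos, hmax⟩ := choose_dir k l S ⟨k - 1, hkS⟩ hSr hlinj hl0
  set r := (w * l j₀).re with hr
  have hler : ∀ a ∈ S, (w * l a).re ≤ r := by
    intro a ha
    rcases eq_or_ne a j₀ with rfl | hne
    · exact le_refl _
    · exact (hmax a ha hne).le
  have hj₀r : j₀ ∈ Finset.range k := Finset.mem_range.mpr (hSr _ hj₀S)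
  have hcj₀ : c j₀ ≠ 0 := hSc _ hj₀S
  -- the exponent-sum Finsupp
  set F : ℂ →₀ Polynomial ℂ :=
      Finsupp.single 0 p₀
      + (∑ j ∈ Finset.range k, Finsupp.single (l j) (Polynomial.C (c j) * p₁))
      + (∑ j₁ ∈ Finset.range k, ∑ j₂ ∈ Finset.range k,
          Finsupp.single (l j₁ + l j₂) (Polynomial.C (c j₁ * c j₂) * p₂))
      + (∑ j₁ ∈ Finset.range k, ∑ j₂ ∈ Finset.range k, ∑ j₃ ∈ Finset.range k,
          Finsupp.single (l j₁ + l j₂ + l j₃) (Polynomial.C (c j₁ * c j₂ * c j₃) * p₃))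
      with hF
  set Ehom : ℂ → ((ℂ →₀ Polynomial ℂ) →+ ℂ) := fun z => Finsupp.liftAddHom fun μ =>
      ((AddMonoidHom.mulRight (Complex.exp (μ * z))).comp
        (Polynomial.evalRingHom z).toAddMonoidHom) with hEhom
  have hEsingle : ∀ (z μ : ℂ) (p : Polynomial ℂ),
      Ehom z (Finsupp.single μ p) = p.eval z * Complex.exp (μ * z) := by
    intro z μ p
    rw [hEhom]
    simp
  have hexp2 : ∀ x y z : ℂ, Complex.exp (x * z) * Complex.exp (y * z)
      = Complex.exp ((x + y) * z) := by
    intro x y z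
    rw [← Complex.exp_add, add_mul]
  have hg' : ∀ z, g z = ∑ j ∈ Finset.range k, c j * Complex.exp (l j * z) := hg
  have hgg : ∀ z, g z * g z = ∑ j₁ ∈ Finset.range k, ∑ j₂ ∈ Finset.range k,
      (c j₁ * c j₂) * Complex.exp ((l j₁ + l j₂) * z) := by
    intro z
    rw [hg', Finset.sum_mul_sum]
    refine Finset.sum_congr rfl fun j₁ _ => Finset.sum_congr rfl fun j₂ _ => ?_
    rw [mul_mul_mul_comm, hexp2]
  have hggg : ∀ z, g z * g z * g z = ∑ j₁ ∈ Finset.range k, ∑ j₂ ∈ Finset.range k,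
      ∑ j₃ ∈ Finset.range k,
      (c j₁ * c j₂ * c j₃) * Complex.exp ((l j₁ + l j₂ + l j₃) * z) := by
    intro z
    rw [hgg, Finset.sum_mul]
    refine Finset.sum_congr rfl fun j₁ _ => ?_
    rw [Finset.sum_mul]
    refine Finset.sum_congr rfl fun j₂ _ => ?_
    rw [hg', Finset.mul_sum]
    refine Finset.sum_congr rfl fun j₃ _ => ?_
    rw [mul_mul_mul_comm, hexp2]
  have hEF : ∀ z, Ehom z F
      = p₀.eval z + p₁.eval z * g z + p₂.eval z * g z ^ 2 + p₃.eval z * g z ^ 3 := by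
    intro z
    have e0 : Ehom z (Finsupp.single 0 p₀) = p₀.eval z := by
      rw [hEsingle]; simp
    have e1 : Ehom z (∑ j ∈ Finset.range k, Finsupp.single (l j) (Polynomial.C (c j) * p₁))
        = p₁.eval z * g z := by
      rw [map_sum, hg', Finset.mul_sum]
      refine Finset.sum_congr rfl fun j _ => ?_
      rw [hEsingle]
      simp only [Polynomial.eval_mul, Polynomial.eval_C]
      ring
    have e2 : Ehom z (∑ j₁ ∈ Finset.range k, ∑ j₂ ∈ Finset.range k,
        Finsupp.single (l j₁ + l j₂) (Polynomial.C (c j₁ * c j₂) * p₂))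
        = p₂.eval z * g z ^ 2 := by
      rw [map_sum, pow_two, hgg, Finset.mul_sum]
      refine Finset.sum_congr rfl fun j₁ _ => ?_
      rw [map_sum, Finset.mul_sum]
      refine Finset.sum_congr rfl fun j₂ _ => ?_
      rw [hEsingle]
      simp only [Polynomial.eval_mul, Polynomial.eval_C]
      ring
    have e3 : Ehom z (∑ j₁ ∈ Finset.range k, ∑ j₂ ∈ Finset.range k, ∑ j₃ ∈ Finset.range k,
        Finsupp.single (l j₁ + l j₂ + l j₃) (Polynomial.C (c j₁ * c j₂ * c j₃) * p₃))
        = p₃.eval z * g z ^ 3 := by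
      have h3 : g z ^ 3 = g z * g z * g z := by ring
      rw [map_sum, h3, hggg, Finset.mul_sum]
      refine Finset.sum_congr rfl fun j₁ _ => ?_
      rw [map_sum, Finset.mul_sum]
      refine Finset.sum_congr rfl fun j₂ _ => ?_
      rw [map_sum, Finset.mul_sum]
      refine Finset.sum_congr rfl fun j₃ _ => ?_
      rw [hEsingle]
      simp only [Polynomial.eval_mul, Polynomial.eval_C]
      ring
    rw [hF, map_add, map_add, map_add, e0, e1, e2, e3]
  have H0 : ∀ z, ∑ μ ∈ F.support, (F μ).eval z * Complex.exp (μ * z) = 0 := by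
    intro z
    have h1 : Ehom z F = ∑ μ ∈ F.support, (F μ).eval z * Complex.exp (μ * z) := by
      rw [hEhom]
      rw [Finsupp.liftAddHom_apply]
      rfl
    rw [← h1, hEF]
    exact hrel z
  have hFz : ∀ μ, F μ = 0 := by
    intro μ
    by_cases hμ : μ ∈ F.support
    · exact key F.support.card F.support rfl (fun ν => F ν) H0 μ hμ
    · exact Finsupp.notMem_support_iff.mp hμ
  have FApp : ∀ μ : ℂ, F μ = (if (0:ℂ) = μ then p₀ else 0)
      + (∑ j ∈ Finset.range k, if l j = μ then Polynomial.C (c j) * p₁ else 0)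
      + (∑ j₁ ∈ Finset.range k, ∑ j₂ ∈ Finset.range k,
          if l j₁ + l j₂ = μ then Polynomial.C (c j₁ * c j₂) * p₂ else 0)
      + (∑ j₁ ∈ Finset.range k, ∑ j₂ ∈ Finset.range k, ∑ j₃ ∈ Finset.range k,
          if l j₁ + l j₂ + l j₃ = μ then Polynomial.C (c j₁ * c j₂ * c j₃) * p₃ else 0) := by
    intro μ
    rw [hF]
    simp [Finsupp.add_apply, Finsupp.finset_sum_apply, Finsupp.single_apply, ite_nest, map_mul]
  have hφadd : ∀ x y : ℂ, (w * (x + y)).re = (w * x).re + (w * y).re := by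
    intro x y
    rw [mul_add, Complex.add_re]
  have hφ0' : (w * (0:ℂ)).re = 0 := by simp
  -- p₃ = 0
  have htri : ∀ a ∈ Finset.range k, ∀ b ∈ Finset.range k, ∀ d ∈ Finset.range k,
      ¬(a = j₀ ∧ b = j₀ ∧ d = j₀) →
      (if l a + l b + l d = l j₀ + l j₀ + l j₀
        then Polynomial.C (c a * c b * c d) * p₃ else 0) = 0 := by
    intro a ha b hb d hd hnot
    by_cases hca : c a = 0
    · simp [hca]
    by_cases hcb : c b = 0
    · simp [hcb]
    by_cases hcd : c d = 0
    · simp [hcd]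
    have haS : a ∈ S := hmemS a ha hca
    have hbS : b ∈ S := hmemS b hb hcb
    have hdS : d ∈ S := hmemS d hd hcd
    rw [if_neg]
    intro he
    have hre := congrArg (fun x => (w * x).re) he
    simp only [hφadd] at hre
    have h1 := hler a haS
    have h2 := hler b hbS
    have h3 := hler d hdS
    have hstrict : (w * l a).re < r ∨ (w * l b).re < r ∨ (w * l d).re < r := by
      by_contra hcon
      push_neg at hcon
      apply hnot
      refine ⟨?_, ?_, ?_⟩
      · by_contra hna; have := hmax a haS hna; linarith [hcon.1]
      · by_contra hnb; have := hmax b hbS hnb; linarith [hcon.2.1]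
      · by_contra hnd; have := hmax d hdS hnd; linarith [hcon.2.2]
    rcases hstrict with h | h | h <;> linarith
  have hp₃ : p₃ = 0 := by
    have h := hFz (l j₀ + l j₀ + l j₀)
    rw [FApp] at h
    have h0 : (if (0:ℂ) = l j₀ + l j₀ + l j₀ then p₀ else 0) = 0 := by
      rw [if_neg]
      intro he
      have hre := congrArg (fun x => (w * x).re) he
      simp only [hφadd, hφ0'] at hre
      linarith
    have h1 : (∑ j ∈ Finset.range k,
        if l j = l j₀ + l j₀ + l j₀ then Polynomial.C (c j) * p₁ else 0) = 0 := by
      apply Finset.sum_eq_zero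
      intro j hj
      by_cases hcj : c j = 0
      · simp [hcj]
      have hjS : j ∈ S := hmemS j hj hcj
      rw [if_neg]
      intro he
      have hre := congrArg (fun x => (w * x).re) he
      simp only [hφadd] at hre
      have := hler j hjS
      linarith
    have h2 : (∑ j₁ ∈ Finset.range k, ∑ j₂ ∈ Finset.range k,
        if l j₁ + l j₂ = l j₀ + l j₀ + l j₀
          then Polynomial.C (c j₁ * c j₂) * p₂ else 0) = 0 := by
      apply Finset.sum_eq_zero
      intro j₁ hj₁
      apply Finset.sum_eq_zero
      intro j₂ hj₂
      by_cases hc1 : c j₁ = 0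
      · simp [hc1]
      by_cases hc2 : c j₂ = 0
      · simp [hc2]
      rw [if_neg]
      intro he
      have hre := congrArg (fun x => (w * x).re) he
      simp only [hφadd] at hre
      have := hler j₁ (hmemS j₁ hj₁ hc1)
      have := hler j₂ (hmemS j₂ hj₂ hc2)
      linarith
    have h3 : (∑ j₁ ∈ Finset.range k, ∑ j₂ ∈ Finset.range k, ∑ j₃ ∈ Finset.range k,
        if l j₁ + l j₂ + l j₃ = l j₀ + l j₀ + l j₀
          then Polynomial.C (c j₁ * c j₂ * c j₃) * p₃ else 0)
        = Polynomial.C (c j₀ * c j₀ * c j₀) * p₃ := by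
      rw [Finset.sum_eq_single_of_mem j₀ hj₀r (fun b hb hbne =>
          Finset.sum_eq_zero fun j₂ hj₂ => Finset.sum_eq_zero fun j₃ hj₃ =>
            htri b hb j₂ hj₂ j₃ hj₃ (fun hand => hbne hand.1)),
        Finset.sum_eq_single_of_mem j₀ hj₀r (fun b hb hbne =>
          Finset.sum_eq_zero fun j₃ hj₃ =>
            htri j₀ hj₀r b hb j₃ hj₃ (fun hand => hbne hand.2.1)),
        Finset.sum_eq_single_of_mem j₀ hj₀r (fun b hb hbne =>
          htri j₀ hj₀r j₀ hj₀r b hb (fun hand => hbne hand.2.2)),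
        if_pos rfl]
    rw [h0, h1, h2, h3, zero_add, zero_add, zero_add] at h
    rcases mul_eq_zero.mp h with hC | hp
    · exact absurd (Polynomial.C_eq_zero.mp hC)
        (mul_ne_zero (mul_ne_zero hcj₀ hcj₀) hcj₀)
    · exact hp
  -- p₂ = 0
  have hpair : ∀ a ∈ Finset.range k, ∀ b ∈ Finset.range k,
      ¬(a = j₀ ∧ b = j₀) →
      (if l a + l b = l j₀ + l j₀ then Polynomial.C (c a * c b) * p₂ else 0) = 0 := by
    intro a ha b hb hnot
    by_cases hca : c a = 0
    · simp [hca]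
    by_cases hcb : c b = 0
    · simp [hcb]
    have haS : a ∈ S := hmemS a ha hca
    have hbS : b ∈ S := hmemS b hb hcb
    rw [if_neg]
    intro he
    have hre := congrArg (fun x => (w * x).re) he
    simp only [hφadd] at hre
    have h1 := hler a haS
    have h2 := hler b hbS
    have hstrict : (w * l a).re < r ∨ (w * l b).re < r := by
      by_contra hcon
      push_neg at hcon
      apply hnot
      refine ⟨?_, ?_⟩
      · by_contra hna; have := hmax a haS hna; linarith [hcon.1]
      · by_contra hnb; have := hmax b hbS hnb; linarith [hcon.2]
    rcases hstrict with h | h <;> linarith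
  have hp₂ : p₂ = 0 := by
    have h := hFz (l j₀ + l j₀)
    rw [FApp] at h
    have h0 : (if (0:ℂ) = l j₀ + l j₀ then p₀ else 0) = 0 := by
      rw [if_neg]
      intro he
      have hre := congrArg (fun x => (w * x).re) he
      simp only [hφadd, hφ0'] at hre
      linarith
    have h1 : (∑ j ∈ Finset.range k,
        if l j = l j₀ + l j₀ then Polynomial.C (c j) * p₁ else 0) = 0 := by
      apply Finset.sum_eq_zero
      intro j hj
      by_cases hcj : c j = 0
      · simp [hcj]
      have hjS : j ∈ S := hmemS j hj hcj
      rw [if_neg]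
      intro he
      have hre := congrArg (fun x => (w * x).re) he
      simp only [hφadd] at hre
      have := hler j hjS
      linarith
    have h3 : (∑ j₁ ∈ Finset.range k, ∑ j₂ ∈ Finset.range k, ∑ j₃ ∈ Finset.range k,
        if l j₁ + l j₂ + l j₃ = l j₀ + l j₀
          then Polynomial.C (c j₁ * c j₂ * c j₃) * p₃ else 0) = 0 := by
      apply Finset.sum_eq_zero; intro j₁ _
      apply Finset.sum_eq_zero; intro j₂ _
      apply Finset.sum_eq_zero; intro j₃ _
      simp [hp₃]
    have h2 : (∑ j₁ ∈ Finset.range k, ∑ j₂ ∈ Finset.range k,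
        if l j₁ + l j₂ = l j₀ + l j₀
          then Polynomial.C (c j₁ * c j₂) * p₂ else 0)
        = Polynomial.C (c j₀ * c j₀) * p₂ := by
      rw [Finset.sum_eq_single_of_mem j₀ hj₀r (fun b hb hbne =>
          Finset.sum_eq_zero fun j₂ hj₂ =>
            hpair b hb j₂ hj₂ (fun hand => hbne hand.1)),
        Finset.sum_eq_single_of_mem j₀ hj₀r (fun b hb hbne =>
          hpair j₀ hj₀r b hb (fun hand => hbne hand.2)),
        if_pos rfl]
    rw [h0, h1, h2, h3, zero_add, zero_add, add_zero] at h
    rcases mul_eq_zero.mp h with hC | hp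
    · exact absurd (Polynomial.C_eq_zero.mp hC) (mul_ne_zero hcj₀ hcj₀)
    · exact hp
  -- p₁ = 0
  have hp₁ : p₁ = 0 := by
    have h := hFz (l j₀)
    rw [FApp] at h
    have h0 : (if (0:ℂ) = l j₀ then p₀ else 0) = 0 := by
      rw [if_neg]
      intro he
      have hre := congrArg (fun x => (w * x).re) he
      simp only [hφ0'] at hre
      linarith
    have h2 : (∑ j₁ ∈ Finset.range k, ∑ j₂ ∈ Finset.range k,
        if l j₁ + l j₂ = l j₀
          then Polynomial.C (c j₁ * c j₂) * p₂ else 0) = 0 := by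
      apply Finset.sum_eq_zero; intro j₁ _
      apply Finset.sum_eq_zero; intro j₂ _
      simp [hp₂]
    have h3 : (∑ j₁ ∈ Finset.range k, ∑ j₂ ∈ Finset.range k, ∑ j₃ ∈ Finset.range k,
        if l j₁ + l j₂ + l j₃ = l j₀
          then Polynomial.C (c j₁ * c j₂ * c j₃) * p₃ else 0) = 0 := by
      apply Finset.sum_eq_zero; intro j₁ _
      apply Finset.sum_eq_zero; intro j₂ _
      apply Finset.sum_eq_zero; intro j₃ _
      simp [hp₃]
    have h1 : (∑ j ∈ Finset.range k,
        if l j = l j₀ then Polynomial.C (c j) * p₁ else 0)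
        = Polynomial.C (c j₀) * p₁ := by
      rw [Finset.sum_eq_single_of_mem j₀ hj₀r ?_, if_pos rfl]
      intro b hb hbne
      by_cases hcb : c b = 0
      · simp [hcb]
      rw [if_neg]
      intro he
      exact hbne (hlinj b (Finset.mem_range.mp hb) j₀ (hSr _ hj₀S) he)
    rw [h0, h1, h2, h3, zero_add, add_zero, add_zero] at h
    rcases mul_eq_zero.mp h with hC | hp
    · exact absurd (Polynomial.C_eq_zero.mp hC) hcj₀
    · exact hp
  -- p₀ = 0
  have hp₀ : p₀ = 0 := by
    have h := hFz 0
    rw [FApp] at h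
    have h1 : (∑ j ∈ Finset.range k,
        if l j = 0 then Polynomial.C (c j) * p₁ else 0) = 0 := by
      apply Finset.sum_eq_zero; intro j _
      simp [hp₁]
    have h2 : (∑ j₁ ∈ Finset.range k, ∑ j₂ ∈ Finset.range k,
        if l j₁ + l j₂ = 0 then Polynomial.C (c j₁ * c j₂) * p₂ else 0) = 0 := by
      apply Finset.sum_eq_zero; intro j₁ _
      apply Finset.sum_eq_zero; intro j₂ _
      simp [hp₂]
    have h3 : (∑ j₁ ∈ Finset.range k, ∑ j₂ ∈ Finset.range k, ∑ j₃ ∈ Finset.range k,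
        if l j₁ + l j₂ + l j₃ = 0
          then Polynomial.C (c j₁ * c j₂ * c j₃) * p₃ else 0) = 0 := by
      apply Finset.sum_eq_zero; intro j₁ _
      apply Finset.sum_eq_zero; intro j₂ _
      apply Finset.sum_eq_zero; intro j₃ _
      simp [hp₃]
    rw [h1, h2, h3, if_pos rfl, add_zero, add_zero, add_zero] at h
    exact h
  exact ⟨hp₀, hp₁, hp₂, hp₃⟩
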